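/- Let n ≥ 3, 2 ≤ k ≤ n, and let ξ : ℝ → ℝ be a C² function satisfying the radial σ_k-Yamabe ODE 2(1-ξ'²)^(k-1)·[(k/n)ξ'' + (1/2 - k/n)(1-ξ'²)]·e^(2kξ) = 1 on an interval. Then the quantity h(t) := e^((2k-n)ξ(t))·(1-ξ'(t)²)^k - e^(-nξ(t)) is constant on that interval. -/

import Mathlib

/-- First integral of the radial σ_k-Yamabe ODE: along a `C²` solution of
`2(1-ξ'²)^(k-1)[(k/n)ξ'' + (1/2 - k/n)(1-ξ'²)]e^(2kξ) = 1` on an interval,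
the quantity `h(t) = e^((2k-n)ξ)(1-ξ'²)^k - e^(-nξ)` is constant. -/
theorem first_integral_sigma_k (n k : ℕ) (hn : 3 ≤ n) (hk : 2 ≤ k) (hkn : k ≤ n)
    (ξ : ℝ → ℝ) (hξ : ContDiff ℝ 2 ξ) (a b : ℝ)
    (hode : ∀ t ∈ Set.Ioo a b,
      2 * (1 - (deriv ξ t) ^ 2) ^ (k - 1) *
        ((k : ℝ) / n * deriv (deriv ξ) t + (1 / 2 - (k : ℝ) / n) * (1 - (deriv ξ t) ^ 2)) *
        Real.exp (2 * k * ξ t) = 1) :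
    ∀ s ∈ Set.Ioo a b, ∀ t ∈ Set.Ioo a b,
      Real.exp ((2 * (k : ℝ) - n) * ξ s) * (1 - (deriv ξ s) ^ 2) ^ k
          - Real.exp (-(n : ℝ) * ξ s)
      = Real.exp ((2 * (k : ℝ) - n) * ξ t) * (1 - (deriv ξ t) ^ 2) ^ k
          - Real.exp (-(n : ℝ) * ξ t) := by
  set u : ℝ → ℝ := deriv ξ with hu
  set h : ℝ → ℝ := fun t =>
    Real.exp ((2 * (k : ℝ) - n) * ξ t) * (1 - u t ^ 2) ^ k - Real.exp (-(n : ℝ) * ξ t) with hh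
  have hn0 : (n : ℝ) ≠ 0 := by positivity
  have hξd : Differentiable ℝ ξ := hξ.differentiable (by norm_num)
  have hud : Differentiable ℝ u := by
    have h2 : ContDiff ℝ (1 + 1) ξ := by norm_num; exact hξ
    exact (contDiff_succ_iff_deriv.mp h2).2.2.differentiable one_ne_zero
  have key : ∀ x ∈ Set.Ioo a b, HasDerivAt h 0 x := by
    intro x hx
    have hux : HasDerivAt u (deriv u x) x := (hud x).hasDerivAt
    have hξx : HasDerivAt ξ (u x) x := (hξd x).hasDerivAt
    have h1 : HasDerivAt (fun t => Real.exp ((2 * (k : ℝ) - n) * ξ t))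
        (Real.exp ((2 * (k : ℝ) - n) * ξ x) * ((2 * (k : ℝ) - n) * u x)) x :=
      ((hξx.const_mul ((2 * (k : ℝ) - n))).exp)
    have h2 : HasDerivAt (fun t => (1 - u t ^ 2) ^ k)
        ((k : ℝ) * (1 - u x ^ 2) ^ (k - 1) * (-(2 * u x * deriv u x))) x := by
      have := ((hux.pow 2).const_sub 1).fun_pow k
      simpa using this
    have h3 : HasDerivAt (fun t => Real.exp (-(n : ℝ) * ξ t))
        (Real.exp (-(n : ℝ) * ξ x) * (-(n : ℝ) * u x)) x :=
      ((hξx.const_mul (-(n : ℝ))).exp)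
    have h4 := (h1.mul h2).sub h3
    have hode_x := hode x hx
    have hval : Real.exp ((2 * (k : ℝ) - n) * ξ x) * ((2 * (k : ℝ) - n) * u x) *
          (1 - u x ^ 2) ^ k +
        Real.exp ((2 * (k : ℝ) - n) * ξ x) *
          ((k : ℝ) * (1 - u x ^ 2) ^ (k - 1) * (-(2 * u x * deriv u x))) -
        Real.exp (-(n : ℝ) * ξ x) * (-(n : ℝ) * u x) = 0 := by
      have hsplit : Real.exp ((2 * (k : ℝ) - n) * ξ x)
          = Real.exp (2 * (k : ℝ) * ξ x) * Real.exp (-(n : ℝ) * ξ x) := by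
        rw [← Real.exp_add]; ring_nf
      have hpow : (1 - u x ^ 2) ^ k = (1 - u x ^ 2) ^ (k - 1) * (1 - u x ^ 2) := by
        rw [← pow_succ]; congr 1; omega
      rw [hsplit, hpow]
      have hode' : (1 - u x ^ 2) ^ (k - 1) *
          (2 * (k : ℝ) * deriv u x + ((n : ℝ) - 2 * k) * (1 - u x ^ 2)) *
          Real.exp (2 * (k : ℝ) * ξ x) = n := by
        have h2n : (2 * (n : ℝ)) ≠ 0 := by positivity
        apply mul_left_cancel₀ h2n
        field_simp at hode_x
        linear_combination 2 * (n : ℝ) * hode_x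
      linear_combination (- u x * Real.exp (-(n : ℝ) * ξ x)) * hode'
    rw [← hval]
    exact h4
  intro s hs t ht
  have hconv : Convex ℝ (Set.Ioo a b) := convex_Ioo a b
  refine hconv.is_const_of_fderivWithin_eq_zero
    (fun x hx => ((key x hx).differentiableAt).differentiableWithinAt) ?_ hs ht
  intro x hx
  have := ((key x hx).hasFDerivAt.hasFDerivWithinAt).fderivWithin
    ((isOpen_Ioo.uniqueDiffOn) x hx)
  rw [this]
  ext
  simp
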